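/- Let A ⊆ ℕ₀ have positive density, i.e., the limit of N(n)/n exists and is positive, where N(n) = #{m ∈ A : m ≤ n}. Let (s_n)_{n∈ℕ₀} be a monotonic sequence of positive real numbers. Then ∑_{n∈ℕ₀} s_n = ∞ if and only if ∑_{n∈A} s_n = ∞. -/

import Mathlib

open Filter

open ENNReal in
section
open scoped ENNReal NNReal

set_option maxHeartbeats 1600000 in
/-- Lemma 3.1: if `A ⊆ ℕ` has positive density and `(s_n)` is a monotonic sequence of
positive reals, then `∑_{n} s_n = ∞` iff `∑_{n ∈ A} s_n = ∞`. -/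
theorem sum_eq_top_iff_sum_over_posDensity_eq_top
    (A : Set ℕ) [DecidablePred (· ∈ A)] (d : ℝ) (hd : 0 < d)
    (hdens : Tendsto
      (fun n : ℕ => (((Finset.range (n + 1)).filter (fun m => m ∈ A)).card : ℝ) / (n : ℝ))
      atTop (nhds d))
    (s : ℕ → ℝ) (hs : ∀ n, 0 < s n) (hmono : Monotone s ∨ Antitone s) :
    (∑' n : ℕ, ENNReal.ofReal (s n) = ⊤) ↔ (∑' n : A, ENNReal.ofReal (s n) = ⊤) := by
  classical
  set g : ℕ → ℝ≥0∞ := fun n => ENNReal.ofReal (s n) with hgdef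
  have hgne : ∀ n, g n ≠ ⊤ := fun n => ENNReal.ofReal_ne_top
  -- counting function
  set N : ℕ → ℕ := fun n => ((Finset.range (n + 1)).filter (fun m => m ∈ A)).card with hNdef
  -- A is infinite
  have hAinf : A.Infinite := by
    by_contra hfin
    rw [Set.not_infinite] at hfin
    have hbd : ∀ n : ℕ, (N n : ℝ) ≤ hfin.toFinset.card := by
      intro n
      have : (Finset.range (n + 1)).filter (fun m => m ∈ A) ⊆ hfin.toFinset := by
        intro m hm
        simp only [Finset.mem_filter] at hm
        simpa using hm.2
      exact_mod_cast Finset.card_le_card this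
    have h0 : Tendsto (fun n : ℕ => (N n : ℝ) / n) atTop (nhds 0) := by
      refine squeeze_zero (fun n => by positivity) (fun n => ?_)
        (tendsto_const_div_atTop_nhds_zero_nat (hfin.toFinset.card : ℝ))
      rcases Nat.eq_zero_or_pos n with h | h
      · simp [h]
      · exact (div_le_div_iff_of_pos_right (by exact_mod_cast h)).2 (hbd n)
    have := tendsto_nhds_unique hdens h0
    linarith
  haveI : Infinite A := hAinf.to_subtype
  -- easy direction: sum over A ≤ sum over ℕ
  have hle : (∑' n : A, g n) ≤ ∑' n : ℕ, g n := by
    rw [tsum_subtype]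
    exact ENNReal.tsum_le_tsum fun n => Set.indicator_le_self A g n
  rcases hmono with hm | hm
  · -- monotone case: both sums are ⊤
    have hfull : (∑' n : ℕ, g n) = ⊤ := by
      refine top_le_iff.1 ?_
      calc (⊤ : ℝ≥0∞) = ∑' _ : ℕ, ENNReal.ofReal (s 0) :=
            (ENNReal.tsum_const_eq_top_of_ne_zero (by simp [ENNReal.ofReal_pos.2 (hs 0), ne_of_gt])).symm
        _ ≤ ∑' n : ℕ, g n :=
            ENNReal.tsum_le_tsum fun n => ENNReal.ofReal_le_ofReal (hm (Nat.zero_le n))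
    have hsub : (∑' n : A, g n) = ⊤ := by
      refine top_le_iff.1 ?_
      calc (⊤ : ℝ≥0∞) = ∑' _ : A, ENNReal.ofReal (s 0) :=
            (ENNReal.tsum_const_eq_top_of_ne_zero (by simp [ENNReal.ofReal_pos.2 (hs 0), ne_of_gt])).symm
        _ ≤ ∑' n : A, g n :=
            ENNReal.tsum_le_tsum fun n => ENNReal.ofReal_le_ofReal (hm (Nat.zero_le _))
    exact ⟨fun _ => hsub, fun _ => hfull⟩
  · -- antitone case
    constructor
    swap
    · intro h
      exact top_le_iff.1 (h ▸ hle)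
    intro htop
    have hanti : ∀ m n : ℕ, m ≤ n → g n ≤ g m := fun m n h =>
      ENNReal.ofReal_le_ofReal (hm h)
    -- condensation: ∑ 2^k g(2^k) = ⊤
    have hcond := ENNReal.le_tsum_condensed (f := g) (fun m n _ h => hanti m n h)
    rw [htop] at hcond
    have hC : (∑' k : ℕ, 2 ^ k * g (2 ^ k)) = ⊤ := by
      rcases (ENNReal.add_eq_top.1 (top_le_iff.1 hcond)) with h | h
      · exact absurd h (hgne 0)
      · exact h
    -- density: get n0
    have hev : ∀ᶠ n : ℕ in atTop, |(N n : ℝ) / n - d| < d / 6 := by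
      have := Metric.tendsto_atTop.1 hdens (d / 6) (by linarith)
      obtain ⟨n0, hn0⟩ := this
      exact eventually_atTop.2 ⟨n0, fun n hn => by simpa [Real.dist_eq] using hn0 n hn⟩
    obtain ⟨n0, hn0⟩ := eventually_atTop.1 hev
    set J : ℕ := n0 with hJdef
    have hJle : ∀ k, J ≤ k → n0 ≤ 2 ^ k := fun k hk =>
      le_trans (le_of_lt (Nat.lt_two_pow_self (n := n0))) (Nat.pow_le_pow_right (by norm_num) hk)
    -- block counting
    have hcnt : ∀ k : ℕ, N (2 ^ (k + 1)) =
        N (2 ^ k) + ((Finset.Ioc (2 ^ k) (2 ^ (k + 1))).filter (fun m => m ∈ A)).card := by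
      intro k
      have hsplit : Finset.range (2 ^ (k + 1) + 1) =
          Finset.range (2 ^ k + 1) ∪ Finset.Ioc (2 ^ k) (2 ^ (k + 1)) := by
        ext m
        have h2 : 2 ^ k ≤ 2 ^ (k + 1) := Nat.pow_le_pow_right (by norm_num) (Nat.le_succ k)
        simp only [Finset.mem_range, Finset.mem_union, Finset.mem_Ioc, Nat.lt_succ_iff]
        omega
      have hdisj : Disjoint ((Finset.range (2 ^ k + 1)).filter (fun m => m ∈ A))
          ((Finset.Ioc (2 ^ k) (2 ^ (k + 1))).filter (fun m => m ∈ A)) := by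
        refine Finset.disjoint_left.2 fun m hm1 hm2 => ?_
        simp only [Finset.mem_filter, Finset.mem_range, Finset.mem_Ioc, Nat.lt_succ_iff] at hm1 hm2
        omega
      rw [hNdef]
      simp only
      rw [hsplit, Finset.filter_union, Finset.card_union_of_disjoint hdisj]
    -- numeric bound on block size
    have hcard : ∀ k : ℕ, J ≤ k → d / 2 * 2 ^ k ≤
        (((Finset.Ioc (2 ^ k) (2 ^ (k + 1))).filter (fun m => m ∈ A)).card : ℝ) := by
      intro k hk
      have hx : (0 : ℝ) < 2 ^ k := by positivity
      have hy : (0 : ℝ) < 2 ^ (k + 1) := by positivity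
      have h1 := hn0 (2 ^ k) (hJle k hk)
      have h2 := hn0 (2 ^ (k + 1)) (le_trans (hJle k hk)
        (Nat.pow_le_pow_right (by norm_num) (Nat.le_succ k)))
      rw [abs_lt] at h1 h2
      push_cast at h1 h2
      have hc1 : (N (2 ^ k) : ℝ) < (d + d / 6) * 2 ^ k := by
        have h : (N (2 ^ k) : ℝ) / 2 ^ k < d + d / 6 := by linarith [h1.2]
        exact (div_lt_iff₀ hx).1 h
      have hc2 : (d - d / 6) * 2 ^ (k + 1) < (N (2 ^ (k + 1)) : ℝ) := by
        have h : d - d / 6 < (N (2 ^ (k + 1)) : ℝ) / 2 ^ (k + 1) := by linarith [h2.1]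
        exact (lt_div_iff₀ hy).1 h
      have heq := hcnt k
      have heq' : (N (2 ^ (k + 1)) : ℝ) = (N (2 ^ k) : ℝ) +
          (((Finset.Ioc (2 ^ k) (2 ^ (k + 1))).filter (fun m => m ∈ A)).card : ℝ) := by
        exact_mod_cast heq
      have hps : (2 : ℝ) ^ (k + 1) = 2 * 2 ^ k := by ring
      push_cast at heq' ⊢
      nlinarith
    -- block sum bound
    set c : ℝ≥0∞ := ENNReal.ofReal (d / 2) with hcdef
    have hblock : ∀ k : ℕ, J ≤ k →
        c * (2 ^ k * g (2 ^ (k + 1))) ≤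
          ∑ m ∈ Finset.Ioc (2 ^ k) (2 ^ (k + 1)), A.indicator g m := by
      intro k hk
      have hind : ∑ m ∈ Finset.Ioc (2 ^ k) (2 ^ (k + 1)), A.indicator g m =
          ∑ m ∈ (Finset.Ioc (2 ^ k) (2 ^ (k + 1))).filter (fun m => m ∈ A), g m := by
        rw [Finset.sum_filter]
        exact Finset.sum_congr rfl fun m _ => by
          by_cases h : m ∈ A <;> simp [Set.indicator_apply, h]
      rw [hind]
      set F := (Finset.Ioc (2 ^ k) (2 ^ (k + 1))).filter (fun m => m ∈ A) with hF
      have h1 : F.card • g (2 ^ (k + 1)) ≤ ∑ m ∈ F, g m := by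
        refine Finset.card_nsmul_le_sum F g _ fun m hm => ?_
        have : m ≤ 2 ^ (k + 1) := (Finset.mem_Ioc.1 (Finset.mem_filter.1 hm).1).2
        exact hanti m (2 ^ (k + 1)) this
      have hpow : ENNReal.ofReal ((2 : ℝ) ^ k) = (2 : ℝ≥0∞) ^ k := by
        rw [ENNReal.ofReal_pow (by norm_num)]
        norm_num
      have h2 : c * 2 ^ k ≤ (F.card : ℝ≥0∞) := by
        have hh : c * 2 ^ k = ENNReal.ofReal (d / 2 * 2 ^ k) := by
          rw [ENNReal.ofReal_mul (by linarith), hpow]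
        rw [hh, ← ENNReal.ofReal_natCast F.card]
        exact ENNReal.ofReal_le_ofReal (hcard k hk)
      calc c * (2 ^ k * g (2 ^ (k + 1))) = (c * 2 ^ k) * g (2 ^ (k + 1)) :=
            (mul_assoc _ _ _).symm
        _ ≤ (F.card : ℝ≥0∞) * g (2 ^ (k + 1)) := mul_le_mul_left h2 _
        _ = F.card • g (2 ^ (k + 1)) := by rw [nsmul_eq_mul]
        _ ≤ ∑ m ∈ F, g m := h1
    -- the divergent lower series
    have htail : (∑' i : ℕ, 2 ^ (i + (J + 1)) * g (2 ^ (i + (J + 1)))) = ⊤ := by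
      have := Summable.sum_add_tsum_nat_add' (f := fun k : ℕ => 2 ^ k * g (2 ^ k)) (k := J + 1)
        ENNReal.summable
      rw [hC] at this
      rcases ENNReal.add_eq_top.1 this with h | h
      · exact absurd h (by
          refine ne_of_lt (ENNReal.sum_lt_top.2 fun i _ => ?_)
          exact ENNReal.mul_lt_top
            (lt_top_iff_ne_top.2 (ENNReal.pow_ne_top ENNReal.ofNat_ne_top))
            (lt_top_iff_ne_top.2 (hgne _)))
      · exact h
    have hD : (∑' i : ℕ, c * (2 ^ (J + i) * g (2 ^ (J + i + 1)))) = ⊤ := by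
      have hkey : (∑' i : ℕ, 2 ^ (J + i) * g (2 ^ (J + i + 1))) = ⊤ := by
        have h2 : ∀ i : ℕ, 2 ^ (i + (J + 1)) * g (2 ^ (i + (J + 1))) =
            2 * (2 ^ (J + i) * g (2 ^ (J + i + 1))) := by
          intro i
          have h3 : i + (J + 1) = J + i + 1 := by omega
          rw [h3, pow_succ]
          ring
        rw [funext h2, ENNReal.tsum_mul_left] at htail
        rcases ENNReal.mul_eq_top.1 htail with h | h
        · exact h.2
        · exact absurd h.1 ENNReal.ofNat_ne_top
      rw [ENNReal.tsum_mul_left, hkey, ENNReal.mul_top]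
      rw [hcdef]
      simp only [ne_eq, ENNReal.ofReal_eq_zero, not_le]
      linarith
    -- combine: partial sums of blocks bound the sum over A
    have hmain : ∀ K : ℕ, ∑ i ∈ Finset.range K, c * (2 ^ (J + i) * g (2 ^ (J + i + 1)))
        ≤ ∑' n : ℕ, A.indicator g n := by
      intro K
      have hunion : ∀ K : ℕ, ∑ i ∈ Finset.range K,
          (∑ m ∈ Finset.Ioc (2 ^ (J + i)) (2 ^ (J + i + 1)), A.indicator g m) =
          ∑ m ∈ Finset.Ioc (2 ^ J) (2 ^ (J + K)), A.indicator g m := by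
        intro K
        induction K with
        | zero => simp
        | succ K ih =>
          rw [Finset.sum_range_succ, ih]
          have hsub : Finset.Ioc (2 ^ J) (2 ^ (J + K)) ∪
              Finset.Ioc (2 ^ (J + K)) (2 ^ (J + K + 1)) =
              Finset.Ioc (2 ^ J) (2 ^ (J + K + 1)) :=
            Finset.Ioc_union_Ioc_eq_Ioc
              (Nat.pow_le_pow_right (by norm_num) (by omega))
              (Nat.pow_le_pow_right (by norm_num) (by omega))
          have hdisj : Disjoint (Finset.Ioc (2 ^ J) (2 ^ (J + K)))
              (Finset.Ioc (2 ^ (J + K)) (2 ^ (J + K + 1))) :=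
            Finset.disjoint_left.2 fun m hm1 hm2 => by
              simp only [Finset.mem_Ioc] at hm1 hm2; omega
          show _ = ∑ m ∈ Finset.Ioc (2 ^ J) (2 ^ (J + K + 1)), A.indicator g m
          rw [← hsub, Finset.sum_union hdisj]
      calc ∑ i ∈ Finset.range K, c * (2 ^ (J + i) * g (2 ^ (J + i + 1)))
          ≤ ∑ i ∈ Finset.range K,
            (∑ m ∈ Finset.Ioc (2 ^ (J + i)) (2 ^ (J + i + 1)), A.indicator g m) :=
            Finset.sum_le_sum fun i _ => hblock (J + i) (by omega)
        _ = ∑ m ∈ Finset.Ioc (2 ^ J) (2 ^ (J + K)), A.indicator g m := hunion K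
        _ ≤ ∑' n : ℕ, A.indicator g n := ENNReal.sum_le_tsum _
    show (∑' n : A, g (n : ℕ)) = ⊤
    rw [tsum_subtype]
    refine top_le_iff.1 ?_
    rw [← hD, ENNReal.tsum_eq_iSup_nat]
    exact iSup_le hmain

end
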